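/- Let P1 be a (K1,F1,Z1,S1) placement delivery array with Z1 < F1 satisfying Condition 1 with parameter λ, witnessed by the map φ, and for j∈[1:F1/λ] let B_j = φ^{-1}(j) (each of size λ·S1/F1), with B_j[μ] denoting the μ-th smallest element of B_j. For an integer m ≥ 2, define the array P_m with row index set F = ∪_{i∈[1:λ]} [(i−1)F1/λ+1 : i·F1/λ]^m and column index set [1:m]×[1:K1], whose entry at row f=(f_1,…,f_m) and column (δ,b) is: * if P1(f_δ,b)=*; otherwise, writing s=P1(f_δ,b), l=φ(s), and μ for the rank of s in B_l, the entry is the vector e∈[1:S1]^m with e_δ=s and e_h = B_{<f_h>_{F1/λ}}[μ] for every h≠δ. Then P_m is an (m·K1, λ·(F1/λ)^m, Z1·(F1/λ)^{m−1}, S1·(F1/λ)^{m−1}) PDA; explicitly: every column of P_m contains exactly Z1·(F1/λ)^{m−1} stars, exactly S1·(F1/λ)^{m−1} distinct non-star vectors occur in P_m, and whenever two distinct cells of P_m carry the same non-star vector, the two cells lie in different rows and different columns and the entries of P_m at the two crossing positions (row of the first cell with column of the second, and row of the second with column of the first) are both *. -/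

import Mathlib

section RankAux

variable {α : Type*} [LinearOrder α]

private lemma myrank_eq (A : Finset α) {x : α} (hx : x ∈ A) :
    (A.filter (· < x)).card = ((A.orderIsoOfFin rfl).symm ⟨x, hx⟩ : ℕ) := by
  set σ := A.orderIsoOfFin rfl
  set t : Fin A.card := σ.symm ⟨x, hx⟩ with ht
  refine Finset.card_bij' (fun y hy => (σ.symm ⟨y, (Finset.mem_filter.1 hy).1⟩ : ℕ) )
    (fun i hi => (σ ⟨i, lt_trans (Finset.mem_range.1 hi) t.isLt⟩ : α)) ?_ ?_ ?_ ?_ |>.trans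
    (Finset.card_range _)
  · intro y hy
    obtain ⟨hyA, hyx⟩ := Finset.mem_filter.1 hy
    have : σ.symm ⟨y, hyA⟩ < σ.symm ⟨x, hx⟩ := by
      rw [σ.symm.lt_iff_lt]; exact Subtype.mk_lt_mk.2 hyx
    exact Finset.mem_range.2 this
  · intro i hi
    refine Finset.mem_filter.2 ⟨(σ _).2, ?_⟩
    have : σ ⟨i, lt_trans (Finset.mem_range.1 hi) t.isLt⟩ < σ (σ.symm ⟨x, hx⟩) := by
      rw [σ.lt_iff_lt]; exact Fin.mk_lt_mk.2 (Finset.mem_range.1 hi)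
    rw [OrderIso.apply_symm_apply] at this; exact this
  · intro y hy; simp
  · intro i hi; simp

private lemma myrank_lt_card (A : Finset α) {x : α} (hx : x ∈ A) :
    (A.filter (· < x)).card < A.card := by
  rw [myrank_eq A hx]; exact ((A.orderIsoOfFin rfl).symm ⟨x, hx⟩).isLt

private lemma getD_myrank (A : Finset α) {x : α} (hx : x ∈ A) (d : α) :
    (A.sort (· ≤ ·)).getD ((A.filter (· < x)).card) d = x := by
  have hlt := myrank_lt_card A hx
  rw [List.getD_eq_getElem _ _ (by rwa [Finset.length_sort])]
  have h1 : (A.sort (· ≤ ·))[(A.filter (· < x)).card]'(by rwa [Finset.length_sort]) =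
      A.orderEmbOfFin rfl ⟨_, hlt⟩ := (Finset.orderEmbOfFin_apply A rfl ⟨_, hlt⟩).symm
  rw [h1]
  have h2 : (⟨_, hlt⟩ : Fin A.card) = (A.orderIsoOfFin rfl).symm ⟨x, hx⟩ :=
    Fin.ext (myrank_eq A hx)
  rw [h2, ← Finset.coe_orderIsoOfFin_apply, OrderIso.apply_symm_apply]

private lemma getD_mem_and_rank (A : Finset α) {i : ℕ} (hi : i < A.card) (d : α) :
    (A.sort (· ≤ ·)).getD i d ∈ A ∧
      (A.filter (· < (A.sort (· ≤ ·)).getD i d)).card = i := by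
  rw [List.getD_eq_getElem _ _ (by rwa [Finset.length_sort])]
  have h1 : (A.sort (· ≤ ·))[i]'(by rwa [Finset.length_sort]) =
      A.orderEmbOfFin rfl ⟨i, hi⟩ := (Finset.orderEmbOfFin_apply A rfl ⟨i, hi⟩).symm
  rw [h1]
  refine ⟨Finset.orderEmbOfFin_mem A rfl ⟨i, hi⟩, ?_⟩
  rw [myrank_eq A (Finset.orderEmbOfFin_mem A rfl ⟨i, hi⟩)]
  have : (⟨A.orderEmbOfFin rfl ⟨i, hi⟩, Finset.orderEmbOfFin_mem A rfl ⟨i, hi⟩⟩ : A)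
      = A.orderIsoOfFin rfl ⟨i, hi⟩ := by
    ext; simp
  rw [this, OrderIso.symm_apply_apply]

end RankAux

section FibAux

variable {S1 n : ℕ}

/-- The fiber `B_jj = φ⁻¹(jj)`. -/
def fibS (φ : Fin S1 → Fin n) (jj : Fin n) : Finset (Fin S1) :=
  Finset.univ.filter fun s' => φ s' = jj

/-- The (0-based) rank of `s` inside its fiber. -/
def rnk (φ : Fin S1 → Fin n) (s : Fin S1) : ℕ :=
  ((fibS φ (φ s)).filter (· < s)).card

/-- The element of the fiber `B_jj` of rank `μ`. -/
def getE (d : Fin S1) (φ : Fin S1 → Fin n) (jj : Fin n) (μ : ℕ) : Fin S1 :=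
  ((fibS φ jj).sort (· ≤ ·)).getD μ d

lemma mem_fibS {φ : Fin S1 → Fin n} {jj : Fin n} {s' : Fin S1} :
    s' ∈ fibS φ jj ↔ φ s' = jj := by simp [fibS]

lemma self_mem_fibS (φ : Fin S1 → Fin n) (s : Fin S1) : s ∈ fibS φ (φ s) := by
  simp [fibS]

lemma rnk_lt (φ : Fin S1 → Fin n) (s : Fin S1) : rnk φ s < (fibS φ (φ s)).card :=
  myrank_lt_card _ (self_mem_fibS φ s)

lemma getE_rnk (d : Fin S1) (φ : Fin S1 → Fin n) (s : Fin S1) :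
    getE d φ (φ s) (rnk φ s) = s :=
  getD_myrank _ (self_mem_fibS φ s) d

lemma getE_phi (d : Fin S1) (φ : Fin S1 → Fin n) (jj : Fin n) (μ : ℕ)
    (hμ : μ < (fibS φ jj).card) : φ (getE d φ jj μ) = jj := by
  exact mem_fibS.1 (getD_mem_and_rank (fibS φ jj) hμ d).1

lemma getE_rnk_eq (d : Fin S1) (φ : Fin S1 → Fin n) (jj : Fin n) (μ : ℕ)
    (hμ : μ < (fibS φ jj).card) : rnk φ (getE d φ jj μ) = μ := by
  have h2 := (getD_mem_and_rank (fibS φ jj) hμ d).2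
  unfold rnk
  rw [getE_phi d φ jj μ hμ]
  exact h2

/-- The non-star entry of `P_m`, as a function of the row `f`, position `δ` and symbol `s`. -/
def EntV {F1 m : ℕ} (hn : 0 < n) (d : Fin S1) (φ : Fin S1 → Fin n)
    (f : Fin m → Fin F1) (δ : Fin m) (s : Fin S1) : Fin m → Fin S1 :=
  fun h => if h = δ then s else getE d φ ⟨(f h).val % n, Nat.mod_lt _ hn⟩ (rnk φ s)

end FibAux


/-- A `(K,F,Z,S)` placement delivery array: an `F × K` array whose entries are either `*`
(encoded as `none`) or integers in `[1:S]` (encoded as `some s` with `s : Fin S`). -/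
def IsPDA (K F Z S : ℕ) (P : Fin F → Fin K → Option (Fin S)) : Prop :=
  (∀ k : Fin K, (Finset.univ.filter fun j : Fin F => P j k = none).card = Z) ∧
  (∀ s : Fin S, ∃ (j : Fin F) (k : Fin K), P j k = some s) ∧
  (∀ (j1 j2 : Fin F) (k1 k2 : Fin K) (s : Fin S),
      P j1 k1 = some s → P j2 k2 = some s → (j1, k1) ≠ (j2, k2) →
      P j1 k2 = none ∧ P j2 k1 = none)

/-- The row index set of Construction 1 (0-based): vectors `f ∈ [1:F1]^m` all of whose
coordinates lie in the same block `[(i-1)·n + 1 : i·n]` of length `n = F1/λ`; 0-based this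
says that all the quotients `(f h) / n` coincide. -/
abbrev PDARow (m F1 n : ℕ) :=
  {f : Fin m → Fin F1 // ∀ h h' : Fin m, (f h).val / n = (f h').val / n}

/-- Lemma 2: the array `P_m` of Construction 1 built from a `(K1,F1,Z1,S1)` PDA
`P1` satisfying Condition 1 with parameter `lam` (witnessed by `φ`, with fibers
`B_j = φ⁻¹(j)`) is an `(m·K1, lam·(F1/lam)^m, Z1·(F1/lam)^(m-1), S1·(F1/lam)^(m-1))` PDA.
Everything is 0-based: the paper's `<j>_n ∈ [1:n]` becomes `j % n ∈ [0:n-1]`, the paper's μ-th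
smallest element `B_j[μ]` (1-based μ) becomes the entry of the sorted list of the fiber at the
0-based rank `|{s' ∈ B_{φ(s)} : s' < s}|` of `s` in its fiber.  The entry of `P_m` at row `f`
and column `(δ,b)` is `*` iff `P1(f_δ,b) = *`, and otherwise the vector `e` with `e_δ = s` and
`e_h = B_{<f_h>_n}[μ]` for `h ≠ δ`, where `s = P1(f_δ,b)` and `μ` is the rank of `s` in
`B_{φ(s)}`.  Conclusions: every column of `P_m` has exactly `Z1·(F1/lam)^(m-1)` stars, exactly
`S1·(F1/lam)^(m-1)` distinct non-star vectors occur, and equal non-star vectors in distinct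
cells lie in different rows and different columns with both crossing entries equal to `*`. -/
theorem lem_theorem1_PDA (K1 F1 Z1 S1 lam m : ℕ)
    (hK1 : 0 < K1) (hF1 : 0 < F1) (hZ1 : 0 < Z1) (hS1 : 0 < S1) (hlam : 0 < lam)
    (hZF : Z1 < F1) (hm : 2 ≤ m)
    (P1 : Fin F1 → Fin K1 → Option (Fin S1))
    (hPDA : IsPDA K1 F1 Z1 S1 P1)
    -- Condition 1 with parameter `lam`, witnessed by `φ`:
    (hdF : lam ∣ F1) (hdZ : lam ∣ Z1)
    (hper : ∀ (j : Fin F1) (k : Fin K1),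
      P1 j k = none ↔
        P1 ⟨j.val % (F1 / lam), Nat.lt_of_le_of_lt (Nat.mod_le _ _) j.isLt⟩ k = none)
    (φ : Fin S1 → Fin (F1 / lam))
    (hstar : ∀ (s : Fin S1) (j : Fin F1) (k : Fin K1),
      P1 j k = some s → P1 (Fin.castLE (Nat.div_le_self F1 lam) (φ s)) k = none)
    (hfib : ∀ jj : Fin (F1 / lam),
      (Finset.univ.filter fun s : Fin S1 => φ s = jj).card * F1 = lam * S1)
    -- the array `P_m` of Construction 1:
    (Pm : PDARow m F1 (F1 / lam) → Fin m × Fin K1 → Option (Fin m → Fin S1))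
    (hPm : ∀ (f : PDARow m F1 (F1 / lam)) (δ : Fin m) (b : Fin K1),
      (P1 (f.1 δ) b = none → Pm f (δ, b) = none) ∧
      (∀ s : Fin S1, P1 (f.1 δ) b = some s →
        Pm f (δ, b) = some (fun h => if h = δ then s else
          (((Finset.univ.filter fun s' : Fin S1 =>
                (φ s').val = (f.1 h).val % (F1 / lam)).sort (· ≤ ·)).getD
            ((Finset.univ.filter fun s' : Fin S1 => φ s' = φ s ∧ s' < s).card)
            ⟨0, hS1⟩)))) :
    -- C1: each column of `P_m` has exactly `Z1·(F1/lam)^(m-1)` stars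
    (∀ c : Fin m × Fin K1,
      (Finset.univ.filter fun f : PDARow m F1 (F1 / lam) => Pm f c = none).card =
        Z1 * (F1 / lam) ^ (m - 1)) ∧
    -- exactly `S1·(F1/lam)^(m-1)` distinct non-star vectors occur in `P_m`
    ((Finset.univ.filter fun e : Fin m → Fin S1 =>
        ∃ f c, Pm f c = some e).card = S1 * (F1 / lam) ^ (m - 1)) ∧
    -- C3 for `P_m`
    (∀ (f1 f2 : PDARow m F1 (F1 / lam)) (c1 c2 : Fin m × Fin K1) (e : Fin m → Fin S1),
      Pm f1 c1 = some e → Pm f2 c2 = some e → (f1, c1) ≠ (f2, c2) →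
      f1 ≠ f2 ∧ c1 ≠ c2 ∧ Pm f1 c2 = none ∧ Pm f2 c1 = none) := by
  obtain ⟨hC1, hC2, hC3⟩ := hPDA
  have hFn : lam * (F1 / lam) = F1 := Nat.mul_div_cancel' hdF
  have hnpos : 0 < F1 / lam := Nat.div_pos (Nat.le_of_dvd hF1 hdF) hlam
  have hmod : ∀ j : Fin F1, j.val % (F1 / lam) < F1 / lam := fun j => Nat.mod_lt _ hnpos
  set d : Fin S1 := ⟨0, hS1⟩ with hd
  -- fiber cardinalities
  have hqc : ∀ jj jj' : Fin (F1 / lam), (fibS φ jj).card = (fibS φ jj').card := by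
    intro jj jj'
    exact Nat.eq_of_mul_eq_mul_right hF1 ((hfib jj).trans (hfib jj').symm)
  set q := (fibS φ ⟨0, hnpos⟩).card with hqdef
  have hq : ∀ jj, (fibS φ jj).card = q := fun jj => hqc jj _
  have hnq : (F1 / lam) * q = S1 := by
    have hsum : (Finset.univ : Finset (Fin S1)).card = ∑ jj : Fin (F1 / lam), (fibS φ jj).card :=
      Finset.card_eq_sum_card_fiberwise (fun s _ => Finset.mem_univ (φ s))
    simp only [hq, Finset.sum_const, smul_eq_mul, Finset.card_univ, Fintype.card_fin] at hsum
    exact hsum.symm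
  have hrq : ∀ s, rnk φ s < q := fun s => (hq (φ s)) ▸ rnk_lt φ s
  -- arithmetic helpers
  have hbound : ∀ (j : Fin F1) (x : ℕ), x < F1 / lam →
      (F1 / lam) * (j.val / (F1 / lam)) + x < F1 := by
    intro j x hx
    have h1 : j.val / (F1 / lam) < lam := by
      rw [Nat.div_lt_iff_lt_mul hnpos]
      calc j.val < F1 := j.isLt
        _ = lam * (F1 / lam) := hFn.symm
    calc (F1 / lam) * (j.val / (F1 / lam)) + x
        < (F1 / lam) * (j.val / (F1 / lam)) + (F1 / lam) := by omega
      _ = (F1 / lam) * (j.val / (F1 / lam) + 1) := by ring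
      _ ≤ (F1 / lam) * lam := Nat.mul_le_mul_left _ h1
      _ = F1 := by rw [mul_comm]; exact hFn
  have hdiv : ∀ (a x : ℕ), x < F1 / lam → ((F1 / lam) * a + x) / (F1 / lam) = a := by
    intro a x hx
    rw [Nat.mul_add_div hnpos, Nat.div_eq_of_lt hx, add_zero]
  have hmodc : ∀ (a x : ℕ), x < F1 / lam → ((F1 / lam) * a + x) % (F1 / lam) = x := by
    intro a x hx
    rw [Nat.mul_add_mod, Nat.mod_eq_of_lt hx]
  -- the entry of `P_m` in the `EntV` form
  have hset1 : ∀ j : Fin F1,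
      (Finset.univ.filter fun s' : Fin S1 => (φ s').val = j.val % (F1 / lam))
        = fibS φ ⟨j.val % (F1 / lam), hmod j⟩ := by
    intro j; ext x; simp [fibS, Fin.ext_iff]
  have hset2 : ∀ s : Fin S1,
      (Finset.univ.filter fun s' : Fin S1 => φ s' = φ s ∧ s' < s)
        = (fibS φ (φ s)).filter (· < s) := by
    intro s; ext x; simp [fibS, Finset.mem_filter, and_comm]
  have hE : ∀ (f : PDARow m F1 (F1 / lam)) (δ : Fin m) (b : Fin K1) (s : Fin S1),
      P1 (f.1 δ) b = some s → Pm f (δ, b) = some (EntV hnpos d φ f.1 δ s) := by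
    intro f δ b s hs
    rw [(hPm f δ b).2 s hs]
    congr 1
    funext h
    by_cases hh : h = δ
    · simp [EntV, hh]
    · simp only [EntV, if_neg hh, getE, rnk]
      rw [hset1 (f.1 h), hset2 s]
  have hinv : ∀ (f : PDARow m F1 (F1 / lam)) (δ : Fin m) (b : Fin K1) (e : Fin m → Fin S1),
      Pm f (δ, b) = some e → ∃ s, P1 (f.1 δ) b = some s ∧ e = EntV hnpos d φ f.1 δ s := by
    intro f δ b e hme
    cases hc : P1 (f.1 δ) b with
    | none => rw [(hPm f δ b).1 hc] at hme; cases hme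
    | some s =>
        refine ⟨s, rfl, ?_⟩
        rw [hE f δ b s hc] at hme
        exact (Option.some.inj hme).symm
  have hstareq : ∀ (f : PDARow m F1 (F1 / lam)) (δ : Fin m) (b : Fin K1),
      Pm f (δ, b) = none ↔ P1 (f.1 δ) b = none := by
    intro f δ b
    constructor
    · intro hme
      cases hc : P1 (f.1 δ) b with
      | none => rfl
      | some s => rw [hE f δ b s hc] at hme; cases hme
    · exact (hPm f δ b).1
  -- facts about `EntV`
  have hEself : ∀ (f : Fin m → Fin F1) (δ : Fin m) (s : Fin S1),
      EntV hnpos d φ f δ s δ = s := by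
    intro f δ s; simp [EntV]
  have hEφ : ∀ (f : Fin m → Fin F1) (δ : Fin m) (s : Fin S1) (h : Fin m), h ≠ δ →
      φ (EntV hnpos d φ f δ s h) = ⟨(f h).val % (F1 / lam), hmod _⟩ := by
    intro f δ s h hh
    simp only [EntV, if_neg hh]
    exact getE_phi d φ _ _ (by rw [hq]; exact hrq s)
  have hErnk : ∀ (f : Fin m → Fin F1) (δ : Fin m) (s : Fin S1) (h : Fin m),
      rnk φ (EntV hnpos d φ f δ s h) = rnk φ s := by
    intro f δ s h
    by_cases hh : h = δ
    · simp [EntV, hh]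
    · simp only [EntV, if_neg hh]
      exact getE_rnk_eq d φ _ _ (by rw [hq]; exact hrq s)
  have hrow_eq : ∀ (f1 f2 : PDARow m F1 (F1 / lam)) (δ : Fin m), f1.1 δ = f2.1 δ →
      (∀ h, (f1.1 h).val % (F1 / lam) = (f2.1 h).val % (F1 / lam)) → f1 = f2 := by
    intro f1 f2 δ hδ hres
    apply Subtype.ext; funext h
    apply Fin.ext
    have e1 := Nat.div_add_mod (f1.1 h).val (F1 / lam)
    have e2 := Nat.div_add_mod (f2.1 h).val (F1 / lam)
    have d1 := f1.2 h δ
    have d2 := f2.2 h δ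
    have hv : (f1.1 δ).val = (f2.1 δ).val := congrArg Fin.val hδ
    rw [← e1, ← e2, d1, d2, hv, hres h]
  refine ⟨?_, ?_, ?_⟩
  · -- C1: star count per column
    rintro ⟨δ, b⟩
    refine (Finset.card_nbij'
      (fun f : PDARow m F1 (F1 / lam) =>
        ((f.1 δ, fun hh : {h : Fin m // h ≠ δ} =>
          (⟨(f.1 hh.1).val % (F1 / lam), hmod _⟩ : Fin (F1 / lam))) :
            Fin F1 × ({h : Fin m // h ≠ δ} → Fin (F1 / lam))))
      (fun p => ⟨fun h => if hh : h = δ then p.1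
          else ⟨(F1 / lam) * (p.1.val / (F1 / lam)) + (p.2 ⟨h, hh⟩).val,
            hbound p.1 _ (p.2 ⟨h, hh⟩).isLt⟩,
        fun h h' => ?_⟩)
      (t := Finset.univ.filter fun p : Fin F1 × ({h : Fin m // h ≠ δ} → Fin (F1 / lam)) =>
        P1 p.1 b = none)
      ?_ ?_ ?_ ?_).trans ?_
    · dsimp only
      by_cases hh : h = δ <;> by_cases hh' : h' = δ
      · rw [dif_pos hh, dif_pos hh']
      · rw [dif_pos hh, dif_neg hh']
        exact (hdiv _ _ (p.2 ⟨h', hh'⟩).isLt).symm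
      · rw [dif_neg hh, dif_pos hh']
        exact hdiv _ _ (p.2 ⟨h, hh⟩).isLt
      · rw [dif_neg hh, dif_neg hh']
        rw [hdiv _ _ (p.2 ⟨h, hh⟩).isLt, hdiv _ _ (p.2 ⟨h', hh'⟩).isLt]
    · intro f hf
      refine Finset.mem_filter.2 ⟨Finset.mem_univ _, ?_⟩
      exact (hstareq f δ b).1 (Finset.mem_filter.1 hf).2
    · intro p hp
      refine Finset.mem_filter.2 ⟨Finset.mem_univ _, ?_⟩
      rw [hstareq]
      show P1 (if hh : δ = δ then p.1 else _) b = none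
      rw [dif_pos rfl]
      exact (Finset.mem_filter.1 hp).2
    · intro f hf
      apply Subtype.ext; funext h
      by_cases hh : h = δ
      · show (if hh : h = δ then f.1 δ else _) = f.1 h
        rw [dif_pos hh, hh]
      · show (if hh : h = δ then f.1 δ else _) = f.1 h
        rw [dif_neg hh]
        apply Fin.ext
        show (F1 / lam) * ((f.1 δ).val / (F1 / lam)) + (f.1 h).val % (F1 / lam) = (f.1 h).val
        rw [← f.2 h δ]
        exact Nat.div_add_mod _ _
    · intro p hp
      obtain ⟨p1, p2⟩ := p
      rw [Prod.mk.injEq]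
      constructor
      · show (if hh : δ = δ then p1 else _) = p1
        rw [dif_pos rfl]
      · funext hh
        apply Fin.ext
        show (if hhh : hh.1 = δ then p1 else _).val % (F1 / lam) = (p2 hh).val
        rw [dif_neg hh.2]
        exact hmodc _ _ (p2 hh).isLt
    · have hteq : (Finset.univ.filter
          fun p : Fin F1 × ({h : Fin m // h ≠ δ} → Fin (F1 / lam)) => P1 p.1 b = none)
          = (Finset.univ.filter fun j : Fin F1 => P1 j b = none) ×ˢ Finset.univ := by
        ext p; simp [Finset.mem_product]
      rw [hteq, Finset.card_product, hC1 b, Finset.card_univ, Fintype.card_fun,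
        Fintype.card_fin]
      congr 2
      rw [Fintype.card_subtype_compl, Fintype.card_subtype_eq, Fintype.card_fin]
  · -- count of distinct non-star vectors
    have hm0 : 0 < m := by omega
    refine (Finset.card_nbij'
      (fun e : Fin m → Fin S1 =>
        ((fun h => φ (e h), rnk φ (e ⟨0, hm0⟩)) : (Fin m → Fin (F1 / lam)) × ℕ))
      (fun p => fun h => getE d φ (p.1 h) p.2)
      (t := (Finset.univ : Finset (Fin m → Fin (F1 / lam))) ×ˢ Finset.range q)
      ?_ ?_ ?_ ?_).trans ?_
    · intro e he
      exact Finset.mem_product.2 ⟨Finset.mem_univ _, Finset.mem_range.2 (hrq _)⟩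
    · intro p hp
      have hp2 : p.2 < q := Finset.mem_range.1 (Finset.mem_product.1 hp).2
      refine Finset.mem_filter.2 ⟨Finset.mem_univ _, ?_⟩
      obtain ⟨j0, b0, hj0⟩ := hC2 (getE d φ (p.1 ⟨0, hm0⟩) p.2)
      refine ⟨⟨fun h => if hh : h = (⟨0, hm0⟩ : Fin m) then j0
          else ⟨(F1 / lam) * (j0.val / (F1 / lam)) + (p.1 h).val,
            hbound j0 _ (p.1 h).isLt⟩,
        fun h h' => ?_⟩, (⟨0, hm0⟩, b0), ?_⟩
      · dsimp only
        by_cases hh : h = (⟨0, hm0⟩ : Fin m) <;> by_cases hh' : h' = (⟨0, hm0⟩ : Fin m)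
        · rw [dif_pos hh, dif_pos hh']
        · rw [dif_pos hh, dif_neg hh']
          exact (hdiv _ _ (p.1 h').isLt).symm
        · rw [dif_neg hh, dif_pos hh']
          exact hdiv _ _ (p.1 h).isLt
        · rw [dif_neg hh, dif_neg hh']
          rw [hdiv _ _ (p.1 h).isLt, hdiv _ _ (p.1 h').isLt]
      · rw [hE _ _ b0 (getE d φ (p.1 ⟨0, hm0⟩) p.2) (by dsimp only; rw [dif_pos rfl]; exact hj0)]
        congr 1
        funext h
        by_cases hh : h = (⟨0, hm0⟩ : Fin m)
        · subst hh
          rw [hEself]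
        · simp only [EntV, if_neg hh]
          have h1 : (⟨(if hhh : h = (⟨0, hm0⟩ : Fin m) then j0
              else ⟨(F1 / lam) * (j0.val / (F1 / lam)) + (p.1 h).val,
                hbound j0 _ (p.1 h).isLt⟩ : Fin F1).val % (F1 / lam), hmod _⟩ :
                  Fin (F1 / lam)) = p.1 h := by
            apply Fin.ext
            show (if hhh : h = (⟨0, hm0⟩ : Fin m) then j0 else _ : Fin F1).val % (F1 / lam)
              = (p.1 h).val
            rw [dif_neg hh]
            exact hmodc _ _ (p.1 h).isLt
          rw [h1, getE_rnk_eq d φ _ _ (by rw [hq]; exact hp2)]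
    · intro e he
      obtain ⟨f, c, hc⟩ := (Finset.mem_filter.1 he).2
      obtain ⟨δ, b⟩ := c
      obtain ⟨s, hs, he'⟩ := hinv f δ b e hc
      have hrk : ∀ h, rnk φ (e h) = rnk φ s := by
        intro h; rw [he']; exact hErnk f.1 δ s h
      funext h
      show getE d φ (φ (e h)) (rnk φ (e ⟨0, hm0⟩)) = e h
      rw [hrk ⟨0, hm0⟩, ← hrk h]
      exact getE_rnk d φ (e h)
    · intro p hp
      have hp2 : p.2 < q := Finset.mem_range.1 (Finset.mem_product.1 hp).2
      obtain ⟨p1, p2⟩ := p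
      rw [Prod.mk.injEq]
      constructor
      · funext h
        exact getE_phi d φ (p1 h) p2 (by rw [hq]; exact hp2)
      · exact getE_rnk_eq d φ (p1 ⟨0, hm0⟩) p2 (by rw [hq]; exact hp2)
    · rw [Finset.card_product, Finset.card_univ, Finset.card_range, Fintype.card_fun,
        Fintype.card_fin, Fintype.card_fin]
      have hpow : (F1 / lam) ^ m = (F1 / lam) ^ (m - 1) * (F1 / lam) := by
        rw [← pow_succ]; congr 1; omega
      calc (F1 / lam) ^ m * q = (F1 / lam) ^ (m - 1) * ((F1 / lam) * q) := by
            rw [hpow]; ring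
        _ = S1 * (F1 / lam) ^ (m - 1) := by rw [hnq]; ring
  · -- C3
    intro f1 f2 c1 c2 e h1 h2 hne
    obtain ⟨δ1, b1⟩ := c1
    obtain ⟨δ2, b2⟩ := c2
    obtain ⟨s1, hs1, he1⟩ := hinv f1 δ1 b1 e h1
    obtain ⟨s2, hs2, he2⟩ := hinv f2 δ2 b2 e h2
    have he : EntV hnpos d φ f1.1 δ1 s1 = EntV hnpos d φ f2.1 δ2 s2 := by
      rw [← he1, ← he2]
    by_cases hδ : δ1 = δ2
    · subst hδ
      have hss : s1 = s2 := by
        have := congrFun he δ1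
        rwa [hEself f1.1 δ1 s1, hEself f2.1 δ1 s2] at this
      subst hss
      have hneb : b1 ≠ b2 := by
        intro hb
        subst hb
        apply hne
        have hfδ : f1.1 δ1 = f2.1 δ1 := by
          by_contra hne'
          have := (hC3 (f1.1 δ1) (f2.1 δ1) b1 b1 s1 hs1 hs2
            (by simp [Prod.ext_iff, hne'])).1
          rw [this] at hs1; cases hs1
        have hff : f1 = f2 := by
          apply hrow_eq f1 f2 δ1 hfδ
          intro h
          by_cases hh : h = δ1
          · subst hh; rw [hfδ]
          · have hφ := congrFun he h
            have hφ1 := hEφ f1.1 δ1 s1 h hh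
            have hφ2 := hEφ f2.1 δ1 s1 h hh
            have hres : (⟨(f1.1 h).val % (F1 / lam), hmod _⟩ : Fin (F1 / lam))
                = ⟨(f2.1 h).val % (F1 / lam), hmod _⟩ := by
              rw [← hφ1, ← hφ2, hφ]
            exact congrArg Fin.val hres
        rw [hff]
      have hcells : ((f1.1 δ1, b1) : Fin F1 × Fin K1) ≠ (f2.1 δ1, b2) := by
        simp [Prod.ext_iff, hneb]
      obtain ⟨hA, hB⟩ := hC3 (f1.1 δ1) (f2.1 δ1) b1 b2 s1 hs1 hs2 hcells
      refine ⟨?_, by simp [Prod.ext_iff, hneb], (hPm f1 δ1 b2).1 hA, (hPm f2 δ1 b1).1 hB⟩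
      intro hf
      rw [hf] at hA
      rw [hA] at hs2; cases hs2
    · -- δ1 ≠ δ2
      have key : ∀ (g1 g2 : PDARow m F1 (F1 / lam)) (δa δb : Fin m) (ba bb : Fin K1)
          (sa sb : Fin S1), δa ≠ δb →
          P1 (g1.1 δa) ba = some sa → P1 (g2.1 δb) bb = some sb →
          EntV hnpos d φ g1.1 δa sa = EntV hnpos d φ g2.1 δb sb →
          P1 (g1.1 δb) bb = none := by
        intro g1 g2 δa δb ba bb sa sb hab ha hb heq
        have h1' := congrFun heq δb
        rw [hEself g2.1 δb sb] at h1'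
        have hφ2 : φ sb = ⟨(g1.1 δb).val % (F1 / lam), hmod _⟩ := by
          rw [← h1']; exact hEφ g1.1 δa sa δb (Ne.symm hab)
        have hst := hstar sb (g2.1 δb) bb hb
        rw [hper]
        have hfin : (⟨(g1.1 δb).val % (F1 / lam),
            Nat.lt_of_le_of_lt (Nat.mod_le _ _) (g1.1 δb).isLt⟩ : Fin F1)
            = Fin.castLE (Nat.div_le_self F1 lam) (φ sb) := by
          apply Fin.ext
          simp [Fin.castLE, hφ2]
        rw [hfin]
        exact hst
      have hA : P1 (f1.1 δ2) b2 = none :=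
        key f1 f2 δ1 δ2 b1 b2 s1 s2 hδ hs1 hs2 he
      have hB : P1 (f2.1 δ1) b1 = none :=
        key f2 f1 δ2 δ1 b2 b1 s2 s1 (Ne.symm hδ) hs2 hs1 he.symm
      refine ⟨?_, by simp [Prod.ext_iff, hδ], (hPm f1 δ2 b2).1 hA, (hPm f2 δ1 b1).1 hB⟩
      intro hf
      rw [← hf] at hs2
      rw [hA] at hs2; cases hs2
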